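/- Every metric m on the edges of G*π that respects the input weights w and fulfills the lower triangle inequality is customized; in particular, for all vertices s and t there exists an up-down st-path in G*π whose length under m equals the shortest st-path distance in G under w. -/

import Mathlib

open SimpleGraph
open scoped ENNReal

variable {V : Type*}

/-- One step of vertex contraction: remove `v` from the current graph and add an edge
between every pair of its current neighbors. -/
def chStep (H : SimpleGraph V) (v : V) : SimpleGraph V where
  Adj a b := a ≠ b ∧ a ≠ v ∧ b ≠ v ∧ (H.Adj a b ∨ (H.Adj v a ∧ H.Adj v b))
  symm := by
    constructor
    rintro a b ⟨h1, h2, h3, h4⟩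
    refine ⟨h1.symm, h3, h2, ?_⟩
    rcases h4 with h | ⟨ha, hb⟩
    · exact Or.inl h.symm
    · exact Or.inr ⟨hb, ha⟩
  loopless := ⟨fun a h => h.1 rfl⟩

/-- All edges ever present while contracting the vertices of the list in order:
the edges of the initial graph together with all added shortcuts. -/
def chList : SimpleGraph V → List V → SimpleGraph V
  | H, [] => H
  | H, v :: l => H ⊔ chList (chStep H v) l

/-- The rank of a vertex with respect to the contraction order `π`. -/
def rk {n : ℕ} (π : Fin n ≃ V) (v : V) : ℕ := (π.symm v : ℕ)

/-- The contraction hierarchy `G*π`: contract `π 0, π 1, …` in this order and collect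
all original edges and all added shortcuts. -/
def chGraph {n : ℕ} (G : SimpleGraph V) (π : Fin n ≃ V) : SimpleGraph V :=
  chList G ((List.finRange n).map ⇑π)

/-- A list of vertices is up-down w.r.t. a rank function: ranks strictly increase
along a prefix and strictly decrease along the remaining suffix, the two parts
meeting at the maximum-rank vertex. -/
def IsUpDown (r : V → ℕ) (l : List V) : Prop :=
  ∃ l₁ x l₂, l = l₁ ++ x :: l₂ ∧
    List.Chain' (fun a b => r a < r b) (l₁ ++ [x]) ∧
    List.Chain' (fun a b => r b < r a) (x :: l₂)

/-- Reachability in the upward directed graph `G^∧π` (edges of `G*π` directed from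
lower to higher rank): the vertex set of the search space `SS v`. -/
def UpReach {n : ℕ} (G : SimpleGraph V) (π : Fin n ≃ V) (v u : V) : Prop :=
  Relation.ReflTransGen (fun a b => (chGraph G π).Adj a b ∧ rk π a < rk π b) v u

/-- Length of a walk: the sum of the weights of its edges. -/
noncomputable def wlen {H : SimpleGraph V} (m : V → V → ℝ≥0∞) {s t : V}
    (p : H.Walk s t) : ℝ≥0∞ :=
  (p.darts.map (fun d => m d.toProd.1 d.toProd.2)).sum

/-- Shortest path distance in a graph `H` under edge weights `m`. -/
noncomputable def gdist (H : SimpleGraph V) (m : V → V → ℝ≥0∞) (s t : V) : ℝ≥0∞ :=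
  ⨅ (p : H.Walk s t), wlen m p

/-- Minimum length of an up-down `s`-`t` path in `G*π`. -/
noncomputable def updist {n : ℕ} (G : SimpleGraph V) (π : Fin n ≃ V)
    (m : V → V → ℝ≥0∞) (s t : V) : ℝ≥0∞ :=
  ⨅ (p : (chGraph G π).Walk s t) (_ : IsUpDown (rk π) p.support), wlen m p

/-- Minimum length of a strictly rank-increasing `u`-`v` path in `G*π`. -/
noncomputable def upOnlyDist {n : ℕ} (G : SimpleGraph V) (π : Fin n ≃ V)
    (m : V → V → ℝ≥0∞) (u v : V) : ℝ≥0∞ :=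
  ⨅ (p : (chGraph G π).Walk u v)
    (_ : List.Chain' (fun a b => rk π a < rk π b) p.support), wlen m p

/-- `S` is a balanced separator of the subgraph of `G` induced by `U`. -/
def IsBalancedSepOn [DecidableEq V] (G : SimpleGraph V) (U S : Finset V) : Prop :=
  S ⊆ U ∧ ∃ A B : Finset V, A ⊆ U ∧ B ⊆ U ∧
    Disjoint A B ∧ Disjoint A S ∧ Disjoint B S ∧ A ∪ B ∪ S = U ∧
    (∀ a ∈ A, ∀ b ∈ B, ¬ G.Adj a b) ∧
    3 * A.card ≤ 2 * U.card ∧ 3 * B.card ≤ 2 * U.card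

/-- Nested dissection orders (as lists, earliest contracted first, separator last)
of induced subgraphs of `G`, in which the separator chosen at every recursion step on
a `k`-vertex subgraph is balanced and has cardinality at most `c * k ^ α`. -/
inductive IsNDOrder [DecidableEq V] (G : SimpleGraph V) (c α : ℝ) : Finset V → List V → Prop
  | empty : IsNDOrder G c α ∅ []
  | step {U S A B : Finset V} {lA lB lS : List V} :
      Disjoint A B → Disjoint A S → Disjoint B S → A ∪ B ∪ S = U →
      (∀ a ∈ A, ∀ b ∈ B, ¬ G.Adj a b) →
      3 * A.card ≤ 2 * U.card → 3 * B.card ≤ 2 * U.card →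
      ((S.card : ℝ) ≤ c * (U.card : ℝ) ^ α) →
      lS.Nodup → lS.toFinset = S →
      IsNDOrder G c α A lA → IsNDOrder G c α B lB →
      IsNDOrder G c α U (lA ++ lB ++ lS)

/-- Number of vertices of the search space `SS v` in `G^∧π`. -/
noncomputable def nVertsSS {n : ℕ} (G : SimpleGraph V) (π : Fin n ≃ V) (v : V) : ℕ :=
  {u | UpReach G π v u}.ncard

/-- Number of arcs of the search space `SS v` in `G^∧π`: arcs of `G^∧π` with both
endpoints reachable from `v`. -/
noncomputable def nArcsSS {n : ℕ} (G : SimpleGraph V) (π : Fin n ≃ V) (v : V) : ℕ :=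
  {q : V × V | (chGraph G π).Adj q.1 q.2 ∧ rk π q.1 < rk π q.2 ∧
    UpReach G π v q.1 ∧ UpReach G π v q.2}.ncard

/-- The rank sequence of a walk: for each edge, the minimum of the ranks of its
endpoints, sorted in decreasing order. -/
def rankSeq {H : SimpleGraph V} (r : V → ℕ) {s t : V} (p : H.Walk s t) : List ℕ :=
  (p.darts.map (fun d => min (r d.toProd.1) (r d.toProd.2))).insertionSort (· ≥ ·)

/-- Directed length of a walk in `G*π` under a pair of directed metrics `(mu, md)`:
each edge traversed from lower rank to higher rank costs its upward weight,
each edge traversed from higher rank to lower rank costs its downward weight. -/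
noncomputable def dlen {H : SimpleGraph V} (r : V → ℕ) (mu md : V → V → ℝ≥0∞)
    {s t : V} (p : H.Walk s t) : ℝ≥0∞ :=
  (p.darts.map (fun d =>
    if r d.toProd.1 < r d.toProd.2 then mu d.toProd.1 d.toProd.2
    else md d.toProd.2 d.toProd.1)).sum

/-- Length of a directed walk `s :: l` under arc weights `wD`. -/
noncomputable def dWalkLen (wD : V → V → ℝ≥0∞) : V → List V → ℝ≥0∞
  | _, [] => 0
  | s, x :: l => wD s x + dWalkLen wD x l

/-- Shortest directed path distance in the directed graph `D` under arc weights `wD`. -/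
noncomputable def ddist (D : V → V → Prop) (wD : V → V → ℝ≥0∞) (s t : V) : ℝ≥0∞ :=
  ⨅ (l : List V) (_ : List.Chain D s l ∧ l.getLastD s = t), dWalkLen wD s l

section Aux

variable {V : Type*}

lemma chStep_adj {H : SimpleGraph V} {v a b : V} :
    (chStep H v).Adj a b ↔
      a ≠ b ∧ a ≠ v ∧ b ≠ v ∧ (H.Adj a b ∨ (H.Adj v a ∧ H.Adj v b)) := Iff.rfl

lemma le_chList : ∀ (l : List V) (H : SimpleGraph V), H ≤ chList H l
  | [], _ => le_rfl
  | _ :: _, _ => le_sup_left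

lemma chList_isolated {v : V} :
    ∀ (l : List V) (H : SimpleGraph V), (∀ a, ¬ H.Adj v a) →
      ∀ a, ¬ (chList H l).Adj v a := by
  intro l
  induction l with
  | nil => exact fun H hv => hv
  | cons u l ih =>
    intro H hv a ha
    rcases (SimpleGraph.sup_adj _ _ _ _).mp ha with h | h
    · exact hv a h
    · refine ih (chStep H u) ?_ a h
      intro b hb
      rcases chStep_adj.mp hb with ⟨-, -, -, h' | ⟨h1, h2⟩⟩
      · exact hv b h'
      · exact hv u h1.symm

lemma chList_adj_of_lower :
    ∀ (l₁ : List V) (H : SimpleGraph V) (z : V) (l₂ : List V) {x y : V},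
      (l₁ ++ z :: l₂).Nodup → x ≠ y → x ∈ l₂ → y ∈ l₂ →
      (chList H (l₁ ++ z :: l₂)).Adj z x → (chList H (l₁ ++ z :: l₂)).Adj z y →
      (chList H (l₁ ++ z :: l₂)).Adj x y := by
  intro l₁
  induction l₁ with
  | nil =>
    intro H z l₂ x y hnd hxy hx hy hzx hzy
    simp only [List.nil_append] at *
    have hznl : z ∉ l₂ := (List.nodup_cons.mp hnd).1
    have hiso : ∀ a, ¬ (chList (chStep H z) l₂).Adj z a := by
      refine chList_isolated l₂ _ ?_
      intro a ha
      exact (chStep_adj.mp ha).2.1 rfl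
    have hzx' : H.Adj z x := by
      rcases (SimpleGraph.sup_adj _ _ _ _).mp hzx with h | h
      · exact h
      · exact absurd h (hiso x)
    have hzy' : H.Adj z y := by
      rcases (SimpleGraph.sup_adj _ _ _ _).mp hzy with h | h
      · exact h
      · exact absurd h (hiso y)
    have hstep : (chStep H z).Adj x y :=
      ⟨hxy, fun h => hznl (h ▸ hx), fun h => hznl (h ▸ hy), Or.inr ⟨hzx', hzy'⟩⟩
    exact (SimpleGraph.sup_adj _ _ _ _).mpr (Or.inr (le_chList l₂ _ hstep))
  | cons v l₁' ih =>
    intro H z l₂ x y hnd hxy hx hy hzx hzy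
    simp only [List.cons_append] at *
    have hvn : v ∉ l₁' ++ z :: l₂ := (List.nodup_cons.mp hnd).1
    have hnd' : (l₁' ++ z :: l₂).Nodup := (List.nodup_cons.mp hnd).2
    have hzv : z ≠ v := fun h =>
      hvn (h ▸ (List.mem_append.mpr (Or.inr List.mem_cons_self)))
    have hxv : x ≠ v := fun h =>
      hvn (h ▸ (List.mem_append.mpr (Or.inr (List.mem_cons_of_mem _ hx))))
    have hyv : y ≠ v := fun h =>
      hvn (h ▸ (List.mem_append.mpr (Or.inr (List.mem_cons_of_mem _ hy))))
    have hzx' : (chList (chStep H v) (l₁' ++ z :: l₂)).Adj z x := by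
      rcases (SimpleGraph.sup_adj _ _ _ _).mp hzx with h | h
      · exact le_chList _ _ ⟨h.ne, hzv, hxv, Or.inl h⟩
      · exact h
    have hzy' : (chList (chStep H v) (l₁' ++ z :: l₂)).Adj z y := by
      rcases (SimpleGraph.sup_adj _ _ _ _).mp hzy with h | h
      · exact le_chList _ _ ⟨h.ne, hzv, hyv, Or.inl h⟩
      · exact h
    exact (SimpleGraph.sup_adj _ _ _ _).mpr
      (Or.inr (ih (chStep H v) z l₂ hnd' hxy hx hy hzx' hzy'))

lemma rk_lt_card {n : ℕ} (π : Fin n ≃ V) (v : V) : rk π v < n := (π.symm v).isLt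

lemma piList_getElem_rk {n : ℕ} (π : Fin n ≃ V) (v : V)
    (h : rk π v < ((List.finRange n).map ⇑π).length) :
    ((List.finRange n).map ⇑π)[rk π v] = v := by
  simp only [List.getElem_map, List.getElem_finRange]
  rw [Equiv.apply_eq_iff_eq_symm_apply]
  exact Fin.ext rfl

lemma mem_drop_of_rk_lt {n : ℕ} (π : Fin n ≃ V) {z v : V} (h : rk π z < rk π v) :
    v ∈ ((List.finRange n).map ⇑π).drop (rk π z + 1) := by
  have hlen : ((List.finRange n).map ⇑π).length = n := by simp
  have hv : rk π v < n := rk_lt_card π v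
  rw [List.mem_iff_getElem]
  refine ⟨rk π v - (rk π z + 1), by rw [List.length_drop]; omega, ?_⟩
  rw [List.getElem_drop]
  have h3 : rk π z + 1 + (rk π v - (rk π z + 1)) = rk π v := by omega
  simp only [h3]
  exact piList_getElem_rk π v (by omega)

lemma chGraph_adj_of_lower {n : ℕ} {G : SimpleGraph V} {π : Fin n ≃ V} {x y z : V}
    (hxy : x ≠ y) (hzx : (chGraph G π).Adj z x) (hzy : (chGraph G π).Adj z y)
    (h1 : rk π z < rk π x) (h2 : rk π z < rk π y) : (chGraph G π).Adj x y := by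
  have hlen : ((List.finRange n).map ⇑π).length = n := by simp
  have hi : rk π z < ((List.finRange n).map ⇑π).length := by rw [hlen]; exact rk_lt_card π z
  have hdecomp : (List.finRange n).map ⇑π =
      ((List.finRange n).map ⇑π).take (rk π z) ++
        z :: ((List.finRange n).map ⇑π).drop (rk π z + 1) := by
    conv_lhs => rw [← List.take_append_drop (rk π z) ((List.finRange n).map ⇑π)]
    rw [List.drop_eq_getElem_cons hi, piList_getElem_rk π z hi]
  have hnd : ((List.finRange n).map ⇑π).Nodup := (List.nodup_finRange n).map π.injective
  have hx : x ∈ ((List.finRange n).map ⇑π).drop (rk π z + 1) := mem_drop_of_rk_lt π h1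
  have hy : y ∈ ((List.finRange n).map ⇑π).drop (rk π z + 1) := mem_drop_of_rk_lt π h2
  unfold chGraph at *
  rw [hdecomp] at hzx hzy hnd ⊢
  exact chList_adj_of_lower _ G z _ hnd hxy hx hy hzx hzy

lemma G_le_chGraph {n : ℕ} (G : SimpleGraph V) (π : Fin n ≃ V) : G ≤ chGraph G π :=
  le_chList _ _

lemma rk_eq_iff {n : ℕ} (π : Fin n ≃ V) {a b : V} (h : rk π a = rk π b) : a = b := by
  have : π.symm a = π.symm b := Fin.ext h
  exact π.symm.injective this

end Aux

section Aux2
variable {V : Type*}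

/-- Cost of a list of vertices: sum of `m` over consecutive pairs. -/
noncomputable def lcost (m : V → V → ℝ≥0∞) : List V → ℝ≥0∞
  | [] => 0
  | [_] => 0
  | a :: b :: l => m a b + lcost m (b :: l)

@[simp] lemma lcost_nil (m : V → V → ℝ≥0∞) : lcost m [] = 0 := rfl
@[simp] lemma lcost_single (m : V → V → ℝ≥0∞) (a : V) : lcost m [a] = 0 := rfl
@[simp] lemma lcost_cons_cons (m : V → V → ℝ≥0∞) (a b : V) (l : List V) :
    lcost m (a :: b :: l) = m a b + lcost m (b :: l) := rfl

lemma wlen_cons {H : SimpleGraph V} (m : V → V → ℝ≥0∞) {u v t : V}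
    (h : H.Adj u v) (p : H.Walk v t) :
    wlen m (SimpleGraph.Walk.cons h p) = m u v + wlen m p := by
  simp [wlen, SimpleGraph.Walk.darts_cons]

lemma wlen_eq_lcost {H : SimpleGraph V} (m : V → V → ℝ≥0∞) {s t : V} (p : H.Walk s t) :
    wlen m p = lcost m p.support := by
  induction p with
  | nil => simp [wlen]
  | cons h p ih =>
    rw [wlen_cons, SimpleGraph.Walk.support_cons, p.support_eq_cons, lcost_cons_cons,
      ← p.support_eq_cons, ih]

lemma wlen_append {H : SimpleGraph V} (m : V → V → ℝ≥0∞) {u v t : V}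
    (p : H.Walk u v) (q : H.Walk v t) :
    wlen m (p.append q) = wlen m p + wlen m q := by
  simp [wlen, SimpleGraph.Walk.darts_append]

lemma wlen_bypass_le [DecidableEq V] {H : SimpleGraph V} (m : V → V → ℝ≥0∞) {s t : V} (p : H.Walk s t) :
    wlen m p.bypass ≤ wlen m p := by
  induction p with
  | nil => exact le_rfl
  | cons h p ih =>
    simp only [SimpleGraph.Walk.bypass]
    split_ifs with hs
    · refine le_trans ?_ (le_trans ih (by rw [wlen_cons]; exact le_add_self))
      conv_rhs => rw [← SimpleGraph.Walk.take_spec p.bypass hs]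
      rw [wlen_append]
      exact le_add_self
    · rw [wlen_cons, wlen_cons]
      exact add_le_add_right ih _

lemma lcost_append_mono (m : V → V → ℝ≥0∞) (A : List V) (x : V) {r r' : List V}
    (h : lcost m (x :: r') ≤ lcost m (x :: r)) :
    lcost m (A ++ x :: r') ≤ lcost m (A ++ x :: r) := by
  induction A with
  | nil => simpa using h
  | cons a A ih =>
    cases A with
    | nil => simpa using add_le_add_right h (m a x)
    | cons b A' =>
      simp only [List.cons_append, lcost_cons_cons] at ih ⊢
      exact add_le_add_right ih _

lemma head?_append_cons (A : List V) (x : V) (r r' : List V) :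
    (A ++ x :: r).head? = (A ++ x :: r').head? := by
  cases A <;> simp

lemma exists_walk_of_chain {H : SimpleGraph V} :
    ∀ (l : List V) (s t : V), List.Chain' H.Adj (s :: l) → (s :: l).getLast? = some t →
      ∃ p : H.Walk s t, p.support = s :: l := by
  intro l
  induction l with
  | nil =>
    intro s t _ hlast
    have : s = t := by simpa using hlast
    subst this
    exact ⟨SimpleGraph.Walk.nil, by simp⟩
  | cons b l ih =>
    intro s t hch hlast
    have hadj : H.Adj s b := (List.isChain_cons_cons.mp hch).1
    obtain ⟨p, hp⟩ := ih b t (List.isChain_cons_cons.mp hch).2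
      (by rwa [List.getLast?_cons_cons] at hlast)
    exact ⟨SimpleGraph.Walk.cons hadj p, by simp [hp]⟩

/-- Every nonempty list whose consecutive entries have distinct ranks is either
up-down or contains a valley. -/
lemma upDown_or_valley (r : V → ℕ) :
    ∀ (l : List V), l ≠ [] → List.Chain' (fun a b => r a ≠ r b) l →
      IsUpDown r l ∨ ∃ A x z y B, l = A ++ x :: z :: y :: B ∧ r z < r x ∧ r z < r y := by
  intro l
  induction l with
  | nil => intro h; exact absurd rfl h
  | cons a l ih =>
    intro _ hch
    cases l with
    | nil =>
      left
      exact ⟨[], a, [], rfl, List.isChain_singleton a, List.isChain_singleton a⟩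
    | cons b l' =>
      have hab : r a ≠ r b := (List.isChain_cons_cons.mp hch).1
      have hch' : List.Chain' (fun a b => r a ≠ r b) (b :: l') := (List.isChain_cons_cons.mp hch).2
      rcases ih (by simp) hch' with hud | ⟨A, x, z, y, B, hEq, h1, h2⟩
      · obtain ⟨l₁, p, l₂, hEq, hinc, hdec⟩ := hud
        rcases lt_or_gt_of_ne hab with hlt | hgt
        · left
          refine ⟨a :: l₁, p, l₂, by rw [List.cons_append, hEq], ?_, hdec⟩
          rw [List.cons_append]
          refine List.isChain_cons.mpr ⟨?_, hinc⟩
          intro c hc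
          cases l₁ with
          | nil =>
            simp only [List.nil_append] at hEq
            have hbp : b = p := (List.cons_eq_cons.mp hEq).1
            simp only [List.nil_append, List.head?_cons, Option.mem_def,
              Option.some.injEq] at hc
            rw [← hc, ← hbp]
            exact hlt
          | cons c' l₁' =>
            simp only [List.cons_append] at hEq
            have hbc : b = c' := (List.cons_eq_cons.mp hEq).1
            simp only [List.cons_append, List.head?_cons, Option.mem_def,
              Option.some.injEq] at hc
            rw [← hc, ← hbc]
            exact hlt
        · cases l₁ with
          | nil =>
            left
            simp only [List.nil_append] at hEq
            obtain ⟨hbp, hl⟩ := List.cons_eq_cons.mp hEq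
            have hdec' : List.Chain' (fun a b => r b < r a) (b :: l') := by
              rw [hbp, hl]; exact hdec
            exact ⟨[], a, b :: l', rfl, List.isChain_singleton a,
              List.isChain_cons_cons.mpr ⟨hgt, hdec'⟩⟩
          | cons c l₁' =>
            right
            simp only [List.cons_append] at hEq
            obtain ⟨hbc, hl⟩ := List.cons_eq_cons.mp hEq
            subst hl
            cases l₁' with
            | nil =>
              have hbp : r b < r p := by
                rw [hbc]
                simp only [List.cons_append, List.nil_append] at hinc
                exact (List.isChain_cons_cons.mp hinc).1
              exact ⟨[], a, b, p, l₂, by simp [hbc], hgt, hbp⟩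
            | cons u l₁'' =>
              have hbu : r b < r u := by
                rw [hbc]
                simp only [List.cons_append, List.nil_append] at hinc
                exact (List.isChain_cons_cons.mp hinc).1
              exact ⟨[], a, b, u, l₁'' ++ p :: l₂, by simp [hbc], hgt, hbu⟩
      · right
        exact ⟨a :: A, x, z, y, B, by rw [List.cons_append, hEq], h1, h2⟩

end Aux2

section Aux3
variable {V : Type*}

lemma listLoop {n : ℕ} (G : SimpleGraph V) (π : Fin n ≃ V) (m : V → V → ℝ≥0∞)
    (hlti : ∀ x y z, (chGraph G π).Adj x y → (chGraph G π).Adj x z →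
      (chGraph G π).Adj z y → rk π z < rk π x → rk π z < rk π y →
      m x y ≤ m x z + m z y)
    (D : ℝ≥0∞) (s t : V) :
    ∀ (k : ℕ) (l : List V), l.length ≤ k → List.Chain' (chGraph G π).Adj l →
      l.head? = some s → l.getLast? = some t → lcost m l ≤ D →
      ∃ l', List.Chain' (chGraph G π).Adj l' ∧ l'.head? = some s ∧
        l'.getLast? = some t ∧ lcost m l' ≤ D ∧ IsUpDown (rk π) l' := by
  intro k
  induction k with
  | zero =>
    intro l hlen hch hhd _ _
    obtain rfl : l = [] := List.length_eq_zero_iff.mp (Nat.le_zero.mp hlen)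
    simp at hhd
  | succ k ih =>
    intro l hlen hch hhd hlast hcost
    have hne : l ≠ [] := by rintro rfl; simp at hhd
    have hchne : List.Chain' (fun a b => rk π a ≠ rk π b) l :=
      hch.imp (fun {a b} h hr => h.ne (rk_eq_iff π hr))
    rcases upDown_or_valley (rk π) l hne hchne with hud | ⟨A, x, z, y, B, hEq, h1, h2⟩
    · exact ⟨l, hch, hhd, hlast, hcost, hud⟩
    subst hEq
    have hch2 : List.Chain' (chGraph G π).Adj (x :: z :: y :: B) :=
      (List.isChain_append.mp hch).2.1
    have hxz : (chGraph G π).Adj x z := (List.isChain_cons_cons.mp hch2).1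
    have hch3 := (List.isChain_cons_cons.mp hch2).2
    have hzy : (chGraph G π).Adj z y := (List.isChain_cons_cons.mp hch3).1
    have hchyB : List.Chain' (chGraph G π).Adj (y :: B) := (List.isChain_cons_cons.mp hch3).2
    have hchA : List.Chain' (chGraph G π).Adj A := (List.isChain_append.mp hch).1
    have hlink := (List.isChain_append.mp hch).2.2
    have hlenl : (A ++ x :: z :: y :: B).length = A.length + B.length + 3 := by
      simp [List.length_append]; omega
    by_cases hxy : x = y
    · subst hxy
      refine ih (A ++ x :: B) ?_ ?_ ?_ ?_ ?_
      · have : (A ++ x :: B).length = A.length + B.length + 1 := by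
          simp [List.length_append]; omega
        omega
      · refine List.isChain_append.mpr ⟨hchA, hchyB, ?_⟩
        intro a ha b hb
        simp only [List.head?_cons, Option.mem_def, Option.some.injEq] at hb
        subst hb
        exact hlink a ha x (by simp)
      · rw [head?_append_cons A x B (z :: x :: B)]; exact hhd
      · rw [List.getLast?_append_cons]
        rw [List.getLast?_append_cons, List.getLast?_cons_cons,
          List.getLast?_cons_cons] at hlast
        exact hlast
      · refine le_trans (lcost_append_mono m A x ?_) hcost
        calc lcost m (x :: B) ≤ m z x + lcost m (x :: B) := self_le_add_left _ _
          _ ≤ m x z + (m z x + lcost m (x :: B)) := self_le_add_left _ _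
          _ = lcost m (x :: z :: x :: B) := by simp
    · have hAdjxy : (chGraph G π).Adj x y := chGraph_adj_of_lower hxy hxz.symm hzy h1 h2
      have hm : m x y ≤ m x z + m z y := hlti x y z hAdjxy hxz hzy h1 h2
      refine ih (A ++ x :: y :: B) ?_ ?_ ?_ ?_ ?_
      · have : (A ++ x :: y :: B).length = A.length + B.length + 2 := by
          simp [List.length_append]; omega
        omega
      · refine List.isChain_append.mpr ⟨hchA, List.isChain_cons_cons.mpr ⟨hAdjxy, hchyB⟩, ?_⟩
        intro a ha b hb
        simp only [List.head?_cons, Option.mem_def, Option.some.injEq] at hb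
        subst hb
        exact hlink a ha x (by simp)
      · rw [head?_append_cons A x (y :: B) (z :: y :: B)]; exact hhd
      · rw [List.getLast?_append_cons, List.getLast?_cons_cons]
        rw [List.getLast?_append_cons, List.getLast?_cons_cons,
          List.getLast?_cons_cons] at hlast
        exact hlast
      · refine le_trans (lcost_append_mono m A x ?_) hcost
        calc lcost m (x :: y :: B) = m x y + lcost m (y :: B) := by simp
          _ ≤ (m x z + m z y) + lcost m (y :: B) := add_le_add_left hm _
          _ = lcost m (x :: z :: y :: B) := by simp [add_assoc]

end Aux3


/-- Every metric `m` on the edges of `G*π` that respects the input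
weights `w` and fulfills the lower triangle inequality is customized; in particular,
for all vertices `s` and `t` there exists an up-down `s`-`t` path in `G*π` whose
length under `m` equals the shortest `s`-`t` path distance in `G` under `w`. -/
theorem stmt7 {V : Type*} {n : ℕ} (G : SimpleGraph V) (hG : G.Connected)
    (π : Fin n ≃ V) (w m : V → V → ℝ≥0∞)
    (hw_symm : ∀ a b, w a b = w b a)
    (hw_pos : ∀ a b, G.Adj a b → 0 < w a b ∧ w a b < ⊤)
    (hm_symm : ∀ a b, m a b = m b a)
    (hm_pos : ∀ a b, (chGraph G π).Adj a b → 0 < m a b)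
    (hresp : ∀ s t, gdist (chGraph G π) m s t = gdist G w s t)
    (hlti : ∀ x y z, (chGraph G π).Adj x y → (chGraph G π).Adj x z →
      (chGraph G π).Adj z y → rk π z < rk π x → rk π z < rk π y →
      m x y ≤ m x z + m z y) :
    (∀ s t, updist G π m s t = gdist (chGraph G π) m s t) ∧
    (∀ s t, ∃ p : (chGraph G π).Walk s t,
      IsUpDown (rk π) p.support ∧ wlen m p = gdist G w s t) := by
  classical
  haveI : Fintype V := Fintype.ofEquiv (Fin n) π
  haveI : (chGraph G π).LocallyFinite := fun v => Set.Finite.fintype (Set.toFinite _)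
  have key : ∀ s t : V, ∃ p : (chGraph G π).Walk s t,
      IsUpDown (rk π) p.support ∧ wlen m p = gdist (chGraph G π) m s t := by
    intro s t
    obtain ⟨w0⟩ := (hG.preconnected s t).mono (G_le_chGraph G π)
    haveI : Nonempty {p : (chGraph G π).Walk s t // p.length < Fintype.card V} :=
      ⟨⟨w0.bypass, w0.bypass_isPath.length_lt⟩⟩
    obtain ⟨q, hq⟩ := Finite.exists_min
      (fun p : {p : (chGraph G π).Walk s t // p.length < Fintype.card V} => wlen m p.val)
    have hqle : wlen m q.val ≤ gdist (chGraph G π) m s t := by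
      refine le_iInf fun p => ?_
      exact le_trans (hq ⟨p.bypass, p.bypass_isPath.length_lt⟩) (wlen_bypass_le m p)
    have hhd : q.val.support.head? = some s := by
      rw [q.val.support_eq_cons]; rfl
    have hlast : q.val.support.getLast? = some t := by
      rw [List.getLast?_eq_getLast (by simp), q.val.getLast_support]
    obtain ⟨l', hch', hhd', hlast', hcost', hud'⟩ :=
      listLoop G π m hlti (gdist (chGraph G π) m s t) s t q.val.support.length
        q.val.support le_rfl q.val.isChain_adj_support hhd hlast
        (by rw [← wlen_eq_lcost]; exact hqle)
    cases l' with
    | nil => simp at hhd'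
    | cons s' l'' =>
      have hss : s = s' := by symm; simpa using hhd'
      subst hss
      obtain ⟨p, hp⟩ := exists_walk_of_chain l'' s t hch' hlast'
      refine ⟨p, hp ▸ hud', le_antisymm ?_ (iInf_le _ p)⟩
      rw [wlen_eq_lcost, hp]
      exact hcost'
  constructor
  · intro s t
    obtain ⟨p, hud, hlen⟩ := key s t
    refine le_antisymm ?_ (le_iInf fun p' => le_iInf fun _ => iInf_le _ p')
    exact le_trans (le_trans (iInf_le _ p) (iInf_le _ hud)) (le_of_eq hlen)
  · intro s t
    obtain ⟨p, hud, hlen⟩ := key s t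
    exact ⟨p, hud, by rw [hlen, hresp]⟩
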